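/- Let B be an m×m matrix with |e^{Bt}y| ≤ K e^{-βt}|y| for t ≥ 0, and let g : ℝ^n × ℝ^m → ℝ^m be Lipschitz in y with constant L_g, with K L_g < β. Then for each fixed ξ ∈ ℝ^n and each continuous bounded forcing η : ℝ → ℝ^m, the integral equation Y_0(τ) = ∫_{-∞}^τ e^{B(τ-s)} g(ξ, Y_0(s) + η(s)) ds has a unique bounded continuous solution Y_0 : ℝ → ℝ^m. -/

import Mathlib

open Real Set MeasureTheory

section aux

attribute [local instance] Matrix.linftyOpNormedRing Matrix.linftyOpNormedAlgebra

lemma expB_cont {m : ℕ} (B : Matrix (Fin m) (Fin m) ℝ) :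
    Continuous fun t : ℝ => NormedSpace.exp (t • B) :=
  NormedSpace.exp_continuous.comp (continuous_id.smul continuous_const)

end aux

lemma continuous_mulVec_pair {m : ℕ} :
    Continuous fun p : Matrix (Fin m) (Fin m) ℝ × (Fin m → ℝ) => p.1.mulVec p.2 := by
  refine continuous_pi fun i => ?_
  simp only [Matrix.mulVec, dotProduct]
  refine continuous_finset_sum _ fun j _ => ?_
  exact ((continuous_apply j).comp ((continuous_apply i).comp continuous_fst)).mul
    ((continuous_apply j).comp continuous_snd)

/-- Under the exponential decay bound for `e^{Bt}` and the gap condition `K L_g < β`, the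
Lyapunov–Perron integral equation for the zeroth-order fast variable has a unique bounded
continuous solution on the whole line. -/
theorem zeroth_order_fixed_point (n m : ℕ) (B : Matrix (Fin m) (Fin m) ℝ)
    (K β Lg : ℝ) (hK : 0 < K) (hβ : 0 < β) (hLg : 0 ≤ Lg) (hgap : K * Lg < β)
    (hB : ∀ t : ℝ, 0 ≤ t → ∀ y : Fin m → ℝ,
      ‖(NormedSpace.exp (t • B)).mulVec y‖ ≤ K * Real.exp (-β * t) * ‖y‖)
    (g : (Fin n → ℝ) → (Fin m → ℝ) → (Fin m → ℝ)) (hgcont : Continuous fun p : (Fin n → ℝ) × (Fin m → ℝ) => g p.1 p.2)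
    (hglip : ∀ x : Fin n → ℝ, ∀ y y' : Fin m → ℝ, ‖g x y - g x y'‖ ≤ Lg * ‖y - y'‖)
    (ξ : Fin n → ℝ) (η : ℝ → Fin m → ℝ) (hηc : Continuous η)
    (hηb : ∃ C, ∀ s, ‖η s‖ ≤ C) :
    ∃! Y₀ : ℝ → Fin m → ℝ,
      (Continuous Y₀ ∧ (∃ C, ∀ τ, ‖Y₀ τ‖ ≤ C)) ∧
      ∀ τ : ℝ, Y₀ τ =
        ∫ s in Iic τ, (NormedSpace.exp ((τ - s) • B)).mulVec (g ξ (Y₀ s + η s)) := by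
  classical
  obtain ⟨C₀, hC₀⟩ := hηb
  have hC₀0 : 0 ≤ C₀ := le_trans (norm_nonneg _) (hC₀ 0)
  set G0 : ℝ := ‖g ξ 0‖ with hG0def
  have hG00 : 0 ≤ G0 := norm_nonneg _
  have hgb : ∀ y : Fin m → ℝ, ‖g ξ y‖ ≤ G0 + Lg * ‖y‖ := by
    intro y
    have h1 := hglip ξ y 0
    have h2 := norm_sub_norm_le (g ξ y) (g ξ 0)
    rw [sub_zero] at h1
    linarith
  have hexpInt : IntegrableOn (fun t : ℝ => Real.exp (-β * t)) (Ioi 0) :=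
    exp_neg_integrableOn_Ioi 0 hβ
  have hexpVal : (∫ t in Ioi (0:ℝ), Real.exp (-β * t)) = 1 / β := by
    have h := integral_comp_mul_left_Ioi (fun x => Real.exp (-x)) 0 hβ
    simp only [mul_zero, integral_exp_neg_Ioi_zero, smul_eq_mul, mul_one] at h
    simp only [← neg_mul] at h
    rw [h, one_div]
  have hEc : Continuous fun t : ℝ => NormedSpace.exp (t • B) := expB_cont B
  -- continuity of the integrand in t
  have intCont : ∀ (h : ℝ → Fin m → ℝ), Continuous h → ∀ τ : ℝ,
      Continuous fun t : ℝ => (NormedSpace.exp (t • B)).mulVec (h (τ - t)) := by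
    intro h hc τ
    exact continuous_mulVec_pair.comp
      (hEc.prodMk (hc.comp (continuous_const.sub continuous_id)))
  -- a.e. bound on the integrand
  have aeBd : ∀ (h : ℝ → Fin m → ℝ) (M : ℝ), (∀ s, ‖h s‖ ≤ M) → ∀ τ : ℝ,
      ∀ᵐ t ∂(volume.restrict (Ioi (0:ℝ))),
        ‖(NormedSpace.exp (t • B)).mulVec (h (τ - t))‖ ≤ K * M * Real.exp (-β * t) := by
    intro h M hM τ
    refine (ae_restrict_iff' measurableSet_Ioi).2 (ae_of_all _ fun t ht => ?_)
    have h1 := hB t (le_of_lt ht) (h (τ - t))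
    have h3 : 0 ≤ K * Real.exp (-β * t) * (M - ‖h (τ - t)‖) :=
      mul_nonneg (mul_nonneg hK.le (Real.exp_pos _).le) (sub_nonneg.2 (hM _))
    nlinarith [Real.exp_pos (-β * t)]
  -- integrability of the integrand
  have intInt : ∀ (h : ℝ → Fin m → ℝ), Continuous h → ∀ M : ℝ, (∀ s, ‖h s‖ ≤ M) → ∀ τ : ℝ,
      IntegrableOn (fun t : ℝ => (NormedSpace.exp (t • B)).mulVec (h (τ - t))) (Ioi 0) := by
    intro h hc M hM τ
    exact Integrable.mono' (hexpInt.const_mul (K * M))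
      ((intCont h hc τ).aestronglyMeasurable.restrict) (aeBd h M hM τ)
  -- bound on the integral
  have intBound : ∀ (h : ℝ → Fin m → ℝ), Continuous h → ∀ M : ℝ, (∀ s, ‖h s‖ ≤ M) → ∀ τ : ℝ,
      ‖∫ t in Ioi (0:ℝ), (NormedSpace.exp (t • B)).mulVec (h (τ - t))‖ ≤ K * M / β := by
    intro h hc M hM τ
    have h1 := norm_integral_le_of_norm_le (hexpInt.const_mul (K * M)) (aeBd h M hM τ)
    calc ‖∫ t in Ioi (0:ℝ), (NormedSpace.exp (t • B)).mulVec (h (τ - t))‖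
        ≤ ∫ t in Ioi (0:ℝ), K * M * Real.exp (-β * t) := h1
      _ = K * M / β := by rw [integral_const_mul, hexpVal]; ring
  -- continuity of the integral in τ
  have Tcont : ∀ (h : ℝ → Fin m → ℝ), Continuous h → ∀ M : ℝ, (∀ s, ‖h s‖ ≤ M) →
      Continuous fun τ : ℝ =>
        ∫ t in Ioi (0:ℝ), (NormedSpace.exp (t • B)).mulVec (h (τ - t)) := by
    intro h hc M hM
    refine continuous_of_dominated
      (fun τ => (intCont h hc τ).aestronglyMeasurable.restrict)
      (fun τ => aeBd h M hM τ) (hexpInt.const_mul (K * M)) ?_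
    refine ae_of_all _ fun t => ?_
    exact continuous_mulVec_pair.comp
      (continuous_const.prodMk (hc.comp (continuous_id.sub continuous_const)))
  -- change of variables
  have chg : ∀ (h : ℝ → Fin m → ℝ) (τ : ℝ),
      (∫ s in Iic τ, (NormedSpace.exp ((τ - s) • B)).mulVec (h s)) =
        ∫ t in Ioi (0:ℝ), (NormedSpace.exp (t • B)).mulVec (h (τ - t)) := by
    intro h τ
    rw [← integral_indicator measurableSet_Iic,
      ← integral_sub_left_eq_self
        (fun s => (Iic τ).indicator
          (fun s => (NormedSpace.exp ((τ - s) • B)).mulVec (h s)) s) volume τ,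
      ← integral_Ici_eq_integral_Ioi, ← integral_indicator measurableSet_Ici]
    congr 1
    funext t
    by_cases ht : (0:ℝ) ≤ t
    · rw [indicator_of_mem (show τ - t ∈ Iic τ by simp [ht]),
        indicator_of_mem (show t ∈ Ici (0:ℝ) from ht)]
      rw [sub_sub_cancel]
    · rw [indicator_of_notMem (show τ - t ∉ Iic τ by simp; linarith),
        indicator_of_notMem (show t ∉ Ici (0:ℝ) from ht)]
  -- the contraction on bounded continuous functions
  set X := BoundedContinuousFunction ℝ (Fin m → ℝ)
  have hhu_cont : ∀ u : X, Continuous fun s => g ξ ((u s) + η s) := by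
    intro u
    exact hgcont.comp (continuous_const.prodMk (u.continuous.add hηc))
  have hhu_bd : ∀ u : X, ∀ s, ‖g ξ ((u s) + η s)‖ ≤ G0 + Lg * (‖u‖ + C₀) := by
    intro u s
    have h1 : ‖(u s) + η s‖ ≤ ‖u‖ + C₀ :=
      (norm_add_le _ _).trans (add_le_add (u.norm_coe_le_norm s) (hC₀ s))
    have h2 := hgb ((u s) + η s)
    have h3 := mul_le_mul_of_nonneg_left h1 hLg
    linarith
  have hMof0 : ∀ u : X, 0 ≤ G0 + Lg * (‖u‖ + C₀) := by
    intro u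
    have := mul_nonneg hLg (add_nonneg (norm_nonneg u) hC₀0)
    linarith
  let T : X → X := fun u => BoundedContinuousFunction.ofNormedAddCommGroup
    (fun τ => ∫ t in Ioi (0:ℝ),
      (NormedSpace.exp (t • B)).mulVec (g ξ ((u (τ - t)) + η (τ - t))))
    (Tcont _ (hhu_cont u) _ (hhu_bd u))
    (K * (G0 + Lg * (‖u‖ + C₀)) / β)
    (fun τ => intBound _ (hhu_cont u) _ (hhu_bd u) τ)
  have hTapp : ∀ (u : X) (τ : ℝ), (T u) τ = ∫ t in Ioi (0:ℝ),
      (NormedSpace.exp (t • B)).mulVec (g ξ ((u (τ - t)) + η (τ - t))) := fun u τ => rfl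
  have hκ0 : 0 ≤ K * Lg / β := div_nonneg (mul_nonneg hK.le hLg) hβ.le
  have Tdist : ∀ u v : X, dist (T u) (T v) ≤ K * Lg / β * dist u v := by
    intro u v
    rw [BoundedContinuousFunction.dist_le (mul_nonneg hκ0 dist_nonneg)]
    intro τ
    rw [dist_eq_norm, hTapp, hTapp,
      ← integral_sub (intInt _ (hhu_cont u) _ (hhu_bd u) τ) (intInt _ (hhu_cont v) _ (hhu_bd v) τ)]
    have haebd : ∀ᵐ t ∂(volume.restrict (Ioi (0:ℝ))),
        ‖(NormedSpace.exp (t • B)).mulVec (g ξ ((u (τ - t)) + η (τ - t))) -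
          (NormedSpace.exp (t • B)).mulVec (g ξ ((v (τ - t)) + η (τ - t)))‖ ≤
        K * Lg * dist u v * Real.exp (-β * t) := by
      refine (ae_restrict_iff' measurableSet_Ioi).2 (ae_of_all _ fun t ht => ?_)
      rw [← Matrix.mulVec_sub]
      have e1 := hB t ht.le (g ξ ((u (τ - t)) + η (τ - t)) - g ξ ((v (τ - t)) + η (τ - t)))
      have e2 := hglip ξ ((u (τ - t)) + η (τ - t)) ((v (τ - t)) + η (τ - t))
      rw [add_sub_add_right_eq_sub] at e2
      have e3 : ‖(u (τ - t)) - v (τ - t)‖ ≤ dist u v := by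
        have := BoundedContinuousFunction.dist_coe_le_dist (f := u) (g := v) (τ - t)
        rwa [dist_eq_norm] at this
      have e4 : ‖g ξ ((u (τ - t)) + η (τ - t)) - g ξ ((v (τ - t)) + η (τ - t))‖ ≤
          Lg * dist u v := e2.trans (mul_le_mul_of_nonneg_left e3 hLg)
      calc ‖(NormedSpace.exp (t • B)).mulVec
              (g ξ ((u (τ - t)) + η (τ - t)) - g ξ ((v (τ - t)) + η (τ - t)))‖
          ≤ K * Real.exp (-β * t) *
            ‖g ξ ((u (τ - t)) + η (τ - t)) - g ξ ((v (τ - t)) + η (τ - t))‖ := e1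
        _ ≤ K * Real.exp (-β * t) * (Lg * dist u v) :=
            mul_le_mul_of_nonneg_left e4 (mul_nonneg hK.le (Real.exp_pos _).le)
        _ = K * Lg * dist u v * Real.exp (-β * t) := by ring
    have h1 := norm_integral_le_of_norm_le (hexpInt.const_mul (K * Lg * dist u v)) haebd
    calc ‖∫ t in Ioi (0:ℝ),
            ((NormedSpace.exp (t • B)).mulVec (g ξ ((u (τ - t)) + η (τ - t))) -
             (NormedSpace.exp (t • B)).mulVec (g ξ ((v (τ - t)) + η (τ - t))))‖
        ≤ ∫ t in Ioi (0:ℝ), K * Lg * dist u v * Real.exp (-β * t) := h1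
      _ = K * Lg / β * dist u v := by rw [integral_const_mul, hexpVal]; ring
  set κ : NNReal := ⟨K * Lg / β, hκ0⟩ with hκdef
  have hκ1 : κ < 1 := by
    rw [← NNReal.coe_lt_coe]
    exact (div_lt_one hβ).2 hgap
  have hT : ContractingWith κ T :=
    ⟨hκ1, LipschitzWith.of_dist_le_mul Tdist⟩
  let Y : X := ContractingWith.fixedPoint T hT
  have hYfix : T Y = Y := hT.fixedPoint_isFixedPt
  refine ⟨⇑Y, ⟨⟨Y.continuous, ⟨‖Y‖, fun τ => Y.norm_coe_le_norm τ⟩⟩, ?_⟩, ?_⟩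
  · intro τ
    rw [chg (fun s => g ξ ((Y s) + η s)) τ]
    have := congrFun (congrArg DFunLike.coe hYfix) τ
    rw [hTapp] at this
    exact this.symm
  · rintro Z ⟨⟨Zc, C, hC⟩, hZ⟩
    let z : X := BoundedContinuousFunction.ofNormedAddCommGroup Z Zc C hC
    have hzfix : T z = z := by
      refine BoundedContinuousFunction.ext fun τ => ?_
      rw [hTapp]
      show (∫ t in Ioi (0:ℝ),
          (NormedSpace.exp (t • B)).mulVec (g ξ ((Z (τ - t)) + η (τ - t)))) = Z τ
      rw [← chg (fun s => g ξ (Z s + η s)) τ]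
      exact (hZ τ).symm
    have hzY : z = Y := hT.fixedPoint_unique hzfix
    exact congrArg (fun w : X => ⇑w) hzY
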